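/- Let D = diag(-λ₁,...,-λ_ℓ, μ₁,...,μ_{n-ℓ}) with λᵢ > 0 and μⱼ ≥ 0, and let D⁺ = diag(0,...,0, μ₁,...,μ_{n-ℓ}). Then for every PSD matrix N, ‖D - N‖_F ≥ ‖D - D⁺‖_F = sqrt(∑ᵢ λᵢ²); i.e., D⁺ is a nearest PSD matrix to D in Frobenius norm. -/

import Mathlib

open Matrix BigOperators Finset

noncomputable def frob {n : ℕ} (A : Matrix (Fin n) (Fin n) ℝ) : ℝ :=
  Real.sqrt (∑ i, ∑ j, (A i j)^2)

noncomputable def distPSD {n : ℕ} (M : Matrix (Fin n) (Fin n) ℝ) : ℝ :=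
  sInf {d : ℝ | ∃ N : Matrix (Fin n) (Fin n) ℝ, N.PosSemidef ∧ d = frob (M - N)}

def kPSD {n : ℕ} (k : ℕ) (M : Matrix (Fin n) (Fin n) ℝ) : Prop :=
  ∀ J : Finset (Fin n), J.card = k →
    (M.submatrix (fun i : {i // i ∈ J} => (i : Fin n))
      (fun i : {i // i ∈ J} => (i : Fin n))).PosSemidef

def kSparse {n : ℕ} (k : ℕ) (x : Fin n → ℝ) : Prop :=
  (Finset.univ.filter (fun i => x i ≠ 0)).card ≤ k

theorem stmt11 (n : ℕ) (d : Fin n → ℝ)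
    (N : Matrix (Fin n) (Fin n) ℝ) (hN : N.PosSemidef) :
    frob (Matrix.diagonal d - Matrix.diagonal (fun i => max (d i) 0))
      ≤ frob (Matrix.diagonal d - N) ∧
    frob (Matrix.diagonal d - Matrix.diagonal (fun i => max (d i) 0))
      = Real.sqrt (∑ i, (min (d i) 0)^2) := by
  have hdiag : (Matrix.diagonal d - Matrix.diagonal (fun i => max (d i) 0))
      = Matrix.diagonal (fun i => min (d i) 0) := by
    ext i j
    rcases eq_or_ne i j with rfl | hij
    · simp only [Matrix.sub_apply, Matrix.diagonal_apply_eq]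
      rcases le_or_gt (d i) 0 with h | h
      · simp [max_eq_right h, min_eq_left h]
      · simp [max_eq_left h.le, min_eq_right h.le]
    · simp [Matrix.diagonal_apply_ne _ hij]
  have heq : frob (Matrix.diagonal d - Matrix.diagonal (fun i => max (d i) 0))
      = Real.sqrt (∑ i, (min (d i) 0)^2) := by
    rw [hdiag, frob]
    congr 1
    apply Finset.sum_congr rfl
    intro i _
    rw [Finset.sum_eq_single i]
    · simp [Matrix.diagonal]
    · intro j _ hj; simp [Matrix.diagonal_apply_ne' _ hj]
    · simp
  refine ⟨?_, heq⟩
  rw [heq, frob]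
  apply Real.sqrt_le_sqrt
  have key : ∀ i, (min (d i) 0)^2 ≤ ((Matrix.diagonal d - N) i i)^2 := by
    intro i
    have hNi : 0 ≤ N i i := by
      exact hN.diag_nonneg
    simp only [Matrix.sub_apply, Matrix.diagonal_apply_eq]
    rcases le_or_gt (d i) 0 with h | h
    · rw [min_eq_left h]
      have h1 : d i - N i i ≤ d i := by linarith
      nlinarith
    · rw [min_eq_right h.le]
      simpa using sq_nonneg (d i - N i i)
  calc ∑ i, (min (d i) 0)^2 ≤ ∑ i, ((Matrix.diagonal d - N) i i)^2 :=
        Finset.sum_le_sum (fun i _ => key i)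
    _ ≤ ∑ i, ∑ j, ((Matrix.diagonal d - N) i j)^2 := by
        apply Finset.sum_le_sum
        intro i _
        exact Finset.single_le_sum (f := fun j => ((Matrix.diagonal d - N) i j)^2) (fun j _ => sq_nonneg _) (Finset.mem_univ i)
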